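/- If the total variation distance between P(X|C=1) and P(X|C=0) is at most ε ≤ 1, and C is uniform binary, then I(C;X) ≤ ε log(2/ε) (for 0 < ε ≤ 1). -/

import Mathlib

open Finset

-- entropy inequality via convexity
lemma entropy_ineq (p : ℝ) (h1 : 1/2 ≤ p) (h2 : p ≤ 1) :
    p * Real.log p + (1-p) * Real.log (1-p) + 2*(1-p)*Real.log 2 ≤ 0 := by
  set t : ℝ := 2*p - 1 with ht
  have ht0 : 0 ≤ 1 - t := by simp [ht]; linarith
  have ht1 : 0 ≤ t := by simp [ht]; linarith
  have hsum : (1-t) + t = 1 := by ring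
  have hf := Real.convexOn_mul_log.2
  have h12 : (1/2 : ℝ) ∈ Set.Ici (0:ℝ) := by norm_num
  have hA := hf h12 (by norm_num : (1:ℝ) ∈ Set.Ici (0:ℝ)) ht0 ht1 hsum
  have hB := hf h12 (by norm_num : (0:ℝ) ∈ Set.Ici (0:ℝ)) ht0 ht1 hsum
  simp only [smul_eq_mul] at hA hB
  have e1 : (1-t) * (1/2 : ℝ) + t * 1 = p := by rw [ht]; ring
  have e2 : (1-t) * (1/2 : ℝ) + t * 0 = 1 - p := by rw [ht]; ring
  rw [e1] at hA
  rw [e2] at hB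
  have hhalf : Real.log (1/2) = -Real.log 2 := by
    rw [Real.log_div one_ne_zero two_ne_zero, Real.log_one]; ring
  rw [hhalf] at hA hB
  simp [Real.log_one] at hA hB
  nlinarith [hA, hB, Real.log_pos (by norm_num : (1:ℝ) < 2)]

lemma key' (a b : ℝ) (hb : 0 ≤ b) (hab : b ≤ a) :
    a * Real.log (a / ((a+b)/2)) + b * Real.log (b / ((a+b)/2)) ≤ (a-b) * Real.log 2 := by
  rcases eq_or_lt_of_le (le_trans hb hab) with h | ha
  · have hb0 : b = 0 := le_antisymm (hab.trans_eq h.symm) hb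
    simp [← h, hb0]
  · -- 0 < a
    have hs : 0 < a + b := by linarith
    set s := a + b with hsdef
    set p := a / s with hp
    have hps : a = p * s := by rw [hp, div_mul_cancel₀ a (ne_of_gt hs)]
    have hqs : b = (1-p) * s := by rw [sub_mul, one_mul, ← hps]; linarith
    have hp1 : p ≤ 1 := by rw [hp]; rw [div_le_one hs]; linarith
    have hp2 : 1/2 ≤ p := by rw [hp, le_div_iff₀ hs]; linarith
    have hp0 : 0 < p := by linarith
    have hE := entropy_ineq p hp2 hp1
    -- rewrite the two log terms
    have hla : a * Real.log (a / (s/2)) = a * Real.log a - a * Real.log (s/2) := by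
      rw [Real.log_div (ne_of_gt ha) (by positivity), mul_sub]
    have hlb : b * Real.log (b / (s/2)) = b * Real.log b - b * Real.log (s/2) := by
      rcases eq_or_lt_of_le hb with h0 | hbpos
      · simp [← h0]
      · rw [Real.log_div (ne_of_gt hbpos) (by positivity), mul_sub]
    rw [hla, hlb]
    have hls : Real.log (s/2) = Real.log s - Real.log 2 := Real.log_div (ne_of_gt hs) two_ne_zero
    have hlA : a * Real.log a = p * s * (Real.log p + Real.log s) := by
      rw [← Real.log_mul (ne_of_gt hp0) (ne_of_gt hs), ← hps]
    have hlB : b * Real.log b = (1-p) * s * (Real.log (1-p) + Real.log s) := by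
      rcases eq_or_lt_of_le hb with h0 | hbpos
      · have : (1 : ℝ) - p = 0 := by
          have := hqs; rw [← h0] at this
          rcases mul_eq_zero.mp this.symm with h | h
          · exact h
          · exact absurd h (ne_of_gt hs)
        simp [← h0, this]
      · have h1p : 0 < 1 - p := by
          by_contra h
          push_neg at h
          have : (1:ℝ) - p = 0 := le_antisymm (by linarith [hp1]) (by nlinarith [hqs, hbpos, hs])
          rw [hqs, this] at hbpos; simp at hbpos
        rw [← Real.log_mul (ne_of_gt h1p) (ne_of_gt hs), ← hqs]
    rw [hlA, hlB, hls]
    have hb' : b = (1-p)*s := hqs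
    have ha' : a = p*s := hps
    rw [ha', hb']
    nlinarith [mul_le_mul_of_nonneg_left hE hs.le]

lemma key (a b : ℝ) (ha : 0 ≤ a) (hb : 0 ≤ b) :
    a * Real.log (a / ((a+b)/2)) + b * Real.log (b / ((a+b)/2)) ≤ |a-b| * Real.log 2 := by
  rcases le_total b a with h | h
  · rw [abs_of_nonneg (by linarith)]; exact key' a b hb h
  · have hk := key' b a ha h
    rw [add_comm b a] at hk
    rw [abs_of_nonpos (by linarith)]
    linarith

/-- If D_TV(P(X|C=1), P(X|C=0)) ≤ ε with 0 < ε ≤ 1 and C is uniform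
binary, then I(C;X) ≤ ε log(2/ε). -/
theorem mutual_information_le_of_tv_close
    {X : Type*} [Fintype X] (P1 P0 : X → ℝ) (ε : ℝ)
    (h1nn : ∀ x, 0 ≤ P1 x) (h0nn : ∀ x, 0 ≤ P0 x)
    (h1sum : ∑ x : X, P1 x = 1) (h0sum : ∑ x : X, P0 x = 1)
    (hε0 : 0 < ε) (hε1 : ε ≤ 1)
    (hTV : (1 / 2) * ∑ x : X, |P1 x - P0 x| ≤ ε) :
    ∑ c : Bool, ∑ x : X,
      ((1 / 2) * (if c then P1 x else P0 x)) *
        Real.log (((1 / 2) * (if c then P1 x else P0 x)) /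
          ((∑ x' : X, (1 / 2) * (if c then P1 x' else P0 x')) *
            (∑ c' : Bool, (1 / 2) * (if c' then P1 x else P0 x))))
      ≤ ε * Real.log (2 / ε) := by
  have hsum_half : ∀ c : Bool, ∑ x' : X, (1/2 : ℝ) * (if c then P1 x' else P0 x') = 1/2 := by
    intro c
    cases c <;> simp [← Finset.mul_sum, h1sum, h0sum]
  have hmarg : ∀ x : X, ∑ c' : Bool, (1/2 : ℝ) * (if c' then P1 x else P0 x)
      = (P1 x + P0 x)/2 := by
    intro x
    rw [Fintype.sum_bool]
    norm_num
    ring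
  simp only [hsum_half, hmarg]
  rw [Fintype.sum_bool]
  simp only [if_true, if_false]
  rw [← Finset.sum_add_distrib]
  have hratio : ∀ a c : ℝ, ((1:ℝ)/2 * a) / (1/2 * c) = a / c := by
    intro a c
    exact mul_div_mul_left a c (by norm_num)
  have step1 : ∑ x : X, ((1/2 * P1 x) * Real.log ((1/2 * P1 x) / (1/2 * ((P1 x + P0 x)/2)))
        + (1/2 * P0 x) * Real.log ((1/2 * P0 x) / (1/2 * ((P1 x + P0 x)/2))))
      ≤ ∑ x : X, (1/2 : ℝ) * (|P1 x - P0 x| * Real.log 2) := by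
    apply Finset.sum_le_sum
    intro x _
    rw [hratio, hratio]
    have h2 : (1:ℝ)/2 * P0 x * Real.log (P0 x / ((P1 x + P0 x)/2))
        = 1/2 * (P0 x * Real.log (P0 x / ((P0 x + P1 x)/2))) := by rw [add_comm (P0 x) (P1 x)]; ring
    have hk := key (P1 x) (P0 x) (h1nn x) (h0nn x)
    nlinarith [hk]
  refine le_trans step1 ?_
  have hL : (0:ℝ) ≤ Real.log 2 := Real.log_nonneg (by norm_num)
  have step2 : ∑ x : X, (1/2 : ℝ) * (|P1 x - P0 x| * Real.log 2)
      = (1/2 * ∑ x : X, |P1 x - P0 x|) * Real.log 2 := by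
    rw [← Finset.mul_sum, ← Finset.sum_mul, mul_assoc]
  rw [step2]
  have step3 : (1/2 * ∑ x : X, |P1 x - P0 x|) * Real.log 2 ≤ ε * Real.log 2 :=
    mul_le_mul_of_nonneg_right hTV hL
  refine le_trans step3 ?_
  have hlog : Real.log 2 ≤ Real.log (2/ε) := by
    apply Real.log_le_log (by norm_num)
    rw [le_div_iff₀ hε0]
    nlinarith
  exact mul_le_mul_of_nonneg_left hlog hε0.le
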